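/- Let p be a prime with p ≡ -1 (mod 12) and let E₁, E₂, D₁, D₂ be the quadratic residue codes of length p over R = ℤ₉[u]/(u²-u). Then E₁ and E₂ are Euclidean self-orthogonal and Eᵢ^⊥ = Dᵢ for i = 1, 2. -/

import Mathlib

open Polynomial

noncomputable section

/-- The ring `R = ℤ₉[u]/(u² - u)`. -/
abbrev R9 : Type := Polynomial (ZMod 9) ⧸ Ideal.span {(X : Polynomial (ZMod 9)) ^ 2 - X}

instance : CommRing R9 := Ideal.Quotient.commRing _

/-- The element `u` of `R`, the image of `X`. -/
def uu : R9 := Ideal.Quotient.mk _ (X : Polynomial (ZMod 9))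

/-- The canonical embedding `ℤ₉ → R`. -/
def ι : ZMod 9 →+* R9 :=
  (Ideal.Quotient.mk _).comp (Polynomial.C : ZMod 9 →+* Polynomial (ZMod 9))
/-- The quotient ring `R[X]/(Xⁿ - 1)`. -/
abbrev Rn (n : ℕ) : Type := Polynomial R9 ⧸ Ideal.span {(X : Polynomial R9) ^ n - 1}

instance (n : ℕ) : CommRing (Rn n) := Ideal.Quotient.commRing _

/-- The constants embedding `R → R[X]/(Xⁿ-1)`. -/
def ofR (n : ℕ) : R9 →+* Rn n :=
  (Ideal.Quotient.mk _).comp (Polynomial.C : R9 →+* Polynomial R9)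

/-- The image of `X` in `R[X]/(Xⁿ-1)`. -/
def xbar (n : ℕ) : Rn n := Ideal.Quotient.mk _ (X : Polynomial R9)

/-- A word `c ∈ Rⁿ` viewed as the element `Σ cᵢ Xⁱ` of `R[X]/(Xⁿ-1)`. -/
def toPoly (n : ℕ) (c : Fin n → R9) : Rn n :=
  ∑ i, ofR n (c i) * xbar n ^ (i : ℕ)

/-- The ring endomorphism of `R[X]/(Xⁿ-1)` induced by `X ↦ X^{n-1} = X⁻¹`. -/
def invX (n : ℕ) : Rn n →+* Rn n :=
  Ideal.Quotient.lift _ (Polynomial.eval₂RingHom (ofR n) (xbar n ^ (n - 1)))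
    (by
      intro a ha
      have hx : xbar n ^ n = 1 := by
        rw [xbar, ← map_pow, ← map_one (Ideal.Quotient.mk _),
          Ideal.Quotient.mk_eq_mk_iff_sub_mem]
        exact Ideal.subset_span rfl
      have h : Ideal.span {(X : Polynomial R9) ^ n - 1} ≤
          RingHom.ker (Polynomial.eval₂RingHom (ofR n) (xbar n ^ (n - 1))) := by
        rw [Ideal.span_le, Set.singleton_subset_iff]
        simp only [SetLike.mem_coe, RingHom.mem_ker, map_sub, map_pow, map_one,
          Polynomial.coe_eval₂RingHom, Polynomial.eval₂_X]
        rw [← pow_mul, Nat.mul_comm, pow_mul, hx, one_pow, sub_self]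
      exact h ha)

/-- The Euclidean dual of the cyclic code given by an ideal of `R[X]/(Xⁿ-1)`. -/
def dualCode (n : ℕ) (J : Ideal (Rn n)) : Set (Fin n → R9) :=
  {x | ∀ c : Fin n → R9, toPoly n c ∈ J → ∑ i, x i * c i = 0}

/-- The cyclic shift. -/
def shift {α : Type*} {n : ℕ} [NeZero n] (c : Fin n → α) : Fin n → α :=
  fun i => c (i - 1)

open scoped Classical

/-- `Q(X) = Σ_{i ∈ Q_p} Xⁱ`, the sum over nonzero quadratic residues mod `p`,
as an element of `R[X]/(X^p - 1)`. -/
def Qpoly (p : ℕ) [Fact p.Prime] : Rn p :=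
  ∑ i : ZMod p, if i ≠ 0 ∧ IsSquare i then xbar p ^ i.val else 0

/-- `N(X) = Σ_{i ∈ N_p} Xⁱ`, the sum over quadratic non-residues mod `p`. -/
def Npoly (p : ℕ) [Fact p.Prime] : Rn p :=
  ∑ i : ZMod p, if i ≠ 0 ∧ ¬ IsSquare i then xbar p ^ i.val else 0

/-- The image of `u` as a constant in `R[X]/(X^p-1)`. -/
def uP (p : ℕ) : Rn p := ofR p uu

/-- Generating idempotent of the quadratic residue code `D₁` (case split on `r mod 3`,
where `p = 12r - 1`). -/
def D1gen (p : ℕ) [Fact p.Prime] : Rn p :=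
  let r := (p + 1) / 12
  if r % 3 = 0 then uP p * (8 * Qpoly p) + (1 - uP p) * (8 * Npoly p)
  else if r % 3 = 1 then
    uP p * (3 + 6 * Qpoly p + 8 * Npoly p) + (1 - uP p) * (3 + 6 * Npoly p + 8 * Qpoly p)
  else uP p * (6 + 3 * Qpoly p + 8 * Npoly p) + (1 - uP p) * (6 + 3 * Npoly p + 8 * Qpoly p)

/-- Generating idempotent of the quadratic residue code `D₂`. -/
def D2gen (p : ℕ) [Fact p.Prime] : Rn p :=
  let r := (p + 1) / 12
  if r % 3 = 0 then uP p * (8 * Npoly p) + (1 - uP p) * (8 * Qpoly p)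
  else if r % 3 = 1 then
    uP p * (3 + 6 * Npoly p + 8 * Qpoly p) + (1 - uP p) * (3 + 6 * Qpoly p + 8 * Npoly p)
  else uP p * (6 + 3 * Npoly p + 8 * Qpoly p) + (1 - uP p) * (6 + 3 * Qpoly p + 8 * Npoly p)

/-- Generating idempotent of the quadratic residue code `E₁`. -/
def E1gen (p : ℕ) [Fact p.Prime] : Rn p :=
  let r := (p + 1) / 12
  if r % 3 = 0 then uP p * (1 + Npoly p) + (1 - uP p) * (1 + Qpoly p)
  else if r % 3 = 1 then
    uP p * (7 + Qpoly p + 3 * Npoly p) + (1 - uP p) * (7 + Npoly p + 3 * Qpoly p)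
  else uP p * (4 + Qpoly p + 6 * Npoly p) + (1 - uP p) * (4 + Npoly p + 6 * Qpoly p)

/-- Generating idempotent of the quadratic residue code `E₂`. -/
def E2gen (p : ℕ) [Fact p.Prime] : Rn p :=
  let r := (p + 1) / 12
  if r % 3 = 0 then uP p * (1 + Qpoly p) + (1 - uP p) * (1 + Npoly p)
  else if r % 3 = 1 then
    uP p * (7 + Npoly p + 3 * Qpoly p) + (1 - uP p) * (7 + Qpoly p + 3 * Npoly p)
  else uP p * (4 + Npoly p + 6 * Qpoly p) + (1 - uP p) * (4 + Qpoly p + 6 * Npoly p)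


set_option maxHeartbeats 1000000 in
set_option synthInstance.maxHeartbeats 200000 in
example : True := trivial

set_option synthInstance.maxHeartbeats 400000
set_option maxHeartbeats 4000000

-- ===== Section 1: basic lemmas =====

lemma xbar_pow_self (n : ℕ) : xbar n ^ n = 1 := by
  rw [xbar, ← map_pow, ← map_one (Ideal.Quotient.mk _), Ideal.Quotient.mk_eq_mk_iff_sub_mem]
  exact Ideal.subset_span rfl

lemma xbar_pow_mod (n : ℕ) [NeZero n] (k : ℕ) : xbar n ^ k = xbar n ^ (k % n) := by
  conv_lhs => rw [← Nat.div_add_mod k n, pow_add, pow_mul, xbar_pow_self, one_pow, one_mul]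

lemma invX_mk (n : ℕ) (q : Polynomial R9) :
    invX n (Ideal.Quotient.mk _ q) = Polynomial.eval₂ (ofR n) (xbar n ^ (n - 1)) q :=
  rfl

lemma invX_xbar (n : ℕ) : invX n (xbar n) = xbar n ^ (n - 1) := by
  rw [xbar, invX_mk]; exact Polynomial.eval₂_X _ _

lemma invX_ofR (n : ℕ) (a : R9) : invX n (ofR n a) = ofR n a := by
  show invX n (Ideal.Quotient.mk _ (Polynomial.C a)) = _
  rw [invX_mk]; exact Polynomial.eval₂_C _ _

lemma uu_mul_uu : uu * uu = uu := by
  rw [uu, ← map_mul, Ideal.Quotient.mk_eq_mk_iff_sub_mem]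
  have h : (X : Polynomial (ZMod 9)) * X - X = X ^ 2 - X := by ring
  rw [h]
  exact Ideal.subset_span rfl

lemma nine_eq_zero (n : ℕ) : (9 : Rn n) = 0 := by
  have h0 : ((9 : ℕ) : ZMod 9) = 0 := by decide
  have h := map_natCast ((ofR n).comp ι) 9
  rw [h0, map_zero] at h
  rw [show ((9:ℕ) : Rn n) = (9 : Rn n) by norm_num] at h
  exact h.symm

-- ===== Section 2: injectivity of toPoly =====

lemma monic_u : ((X : Polynomial (ZMod 9)) ^ 2 - X).Monic :=
  Polynomial.monic_X_pow_sub (by simpa using Polynomial.degree_X_le.trans_lt (by norm_num))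

instance : Nontrivial (ZMod 9) := ⟨0, 1, by decide⟩

instance : Nontrivial R9 := by
  have hd : 0 < ((X : Polynomial (ZMod 9)) ^ 2 - X).natDegree := by
    have h1 : ((X : Polynomial (ZMod 9)) ^ 2 - C 1 * X ^ 1) = X ^ 2 - X := by
      simp
    have h2 : ((X : Polynomial (ZMod 9)) ^ 2 - X).natDegree = 2 := by
      compute_degree!
    omega
  let bb := AdjoinRoot.powerBasisAux' monic_u
  exact nontrivial_of_ne (bb ⟨0, hd⟩) 0 (bb.ne_zero _)

lemma monic_g (p : ℕ) (hp : p ≠ 0) : ((X : Polynomial R9) ^ p - 1).Monic :=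
  Polynomial.monic_X_pow_sub (by
    refine Polynomial.degree_one_le.trans_lt ?_
    exact_mod_cast Nat.pos_of_ne_zero hp)

lemma natDegree_g (p : ℕ) (hp : p ≠ 0) : ((X : Polynomial R9) ^ p - 1).natDegree = p := by
  have h1 : ((X : Polynomial R9) ^ p - C 1) = X ^ p - 1 := by rw [map_one]
  rw [← h1]; exact Polynomial.natDegree_X_pow_sub_C

lemma repr_symm_toPoly (p : ℕ) (hp : p ≠ 0) (c : Fin p → R9) :
    (AdjoinRoot.powerBasisAux' (monic_g p hp)).repr.symm
      (Finsupp.equivFunOnFinite.symm fun i => c (Fin.cast (natDegree_g p hp) i))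
      = toPoly p c := by
  rw [AdjoinRoot.powerBasisAux'_repr_symm_apply, map_sum, toPoly]
  refine Fintype.sum_equiv (finCongr (natDegree_g p hp)) _ _ fun i => ?_
  simp only [Finsupp.equivFunOnFinite_symm_apply_apply, finCongr_apply, Fin.coe_cast]
  rw [← Polynomial.C_mul_X_pow_eq_monomial, map_mul, map_pow]
  rfl

lemma toPoly_eq_zero (p : ℕ) (hp : p ≠ 0) {b : Fin p → R9}
    (h : toPoly p b = 0) : b = 0 := by
  have key := repr_symm_toPoly p hp b
  rw [h] at key
  have h2 : (Finsupp.equivFunOnFinite.symm fun i => b (Fin.cast (natDegree_g p hp) i)) = 0 :=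
    (AdjoinRoot.powerBasisAux' (monic_g p hp)).repr.symm.injective (by rw [key, map_zero]; rfl)
  funext j
  have h3 := DFunLike.congr_fun h2 (Fin.cast (natDegree_g p hp).symm j)
  simpa using h3

lemma toPoly_surjective (p : ℕ) (hp : p ≠ 0) (z : Rn p) : ∃ c : Fin p → R9, toPoly p c = z := by
  refine ⟨fun j => (AdjoinRoot.powerBasisAux' (monic_g p hp)).repr z
    (Fin.cast (natDegree_g p hp).symm j), ?_⟩
  rw [← repr_symm_toPoly p hp]
  have h2 : (Finsupp.equivFunOnFinite.symm fun i =>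
      (fun j => (AdjoinRoot.powerBasisAux' (monic_g p hp)).repr z
        (Fin.cast (natDegree_g p hp).symm j)) (Fin.cast (natDegree_g p hp) i))
      = (AdjoinRoot.powerBasisAux' (monic_g p hp)).repr z := by
    have h3 : (fun i => (fun j => (AdjoinRoot.powerBasisAux' (monic_g p hp)).repr z
        (Fin.cast (natDegree_g p hp).symm j)) (Fin.cast (natDegree_g p hp) i))
        = fun i => (AdjoinRoot.powerBasisAux' (monic_g p hp)).repr z i := by
      funext i; simp
    rw [h3]
    exact Finsupp.equivFunOnFinite_symm_coe _
  rw [h2]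
  exact (AdjoinRoot.powerBasisAux' (monic_g p hp)).repr.symm_apply_apply z

lemma val_aux (p : ℕ) [NeZero p] (i j : Fin p) :
    ((i : ℕ) + (p - 1) * (j : ℕ)) % p = ((i - j : Fin p) : ℕ) := by
  have hj : (j : ℕ) ≤ p := le_of_lt j.isLt
  have h1 : (p - 1) * (j : ℕ) + (j : ℕ) = p * (j : ℕ) := by
    have hp1 : p - 1 + 1 = p := Nat.succ_pred_eq_of_pos (Nat.pos_of_ne_zero (NeZero.ne p))
    calc (p - 1) * (j : ℕ) + (j : ℕ) = (p - 1 + 1) * (j : ℕ) := by ring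
    _ = p * (j : ℕ) := by rw [hp1]
  have h2 : (p - (j : ℕ)) + (j : ℕ) = p := Nat.sub_add_cancel hj
  have hmod : ((p - 1) * (j : ℕ)) ≡ (p - (j : ℕ)) [MOD p] := by
    have h4 : ((p - 1) * (j : ℕ) + (j : ℕ)) ≡ ((p - (j : ℕ)) + (j : ℕ)) [MOD p] := by
      unfold Nat.ModEq
      rw [h1, h2, Nat.mul_mod_right, Nat.mod_self]
    exact h4.add_right_cancel' _
  have h5 : ((i : ℕ) + (p - 1) * (j : ℕ)) ≡ ((i : ℕ) + (p - (j : ℕ))) [MOD p] :=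
    Nat.ModEq.add_left _ hmod
  rw [Fin.sub_def]
  show _ = (p - (j : ℕ) + (i : ℕ)) % p
  rw [Nat.add_comm (p - (j : ℕ))]
  exact h5

lemma xbar_fin_sub (p : ℕ) [NeZero p] (i j : Fin p) :
    xbar p ^ (i : ℕ) * (xbar p ^ (p - 1)) ^ (j : ℕ) = xbar p ^ ((i - j : Fin p) : ℕ) := by
  rw [← pow_mul, ← pow_add, xbar_pow_mod, val_aux]

lemma toPoly_shift (p : ℕ) [NeZero p] (c : Fin p → R9) (k : Fin p) :
    toPoly p (fun i => c (i - k)) = xbar p ^ (k : ℕ) * toPoly p c := by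
  have hx1 : xbar p ^ (p - 1) * xbar p = 1 := by
    rw [← pow_succ, Nat.sub_add_cancel (Nat.one_le_iff_ne_zero.mpr (NeZero.ne p)), xbar_pow_self]
  rw [toPoly, toPoly, Finset.mul_sum]
  refine Fintype.sum_equiv (Equiv.subRight k) _ _ fun i => ?_
  simp only [Equiv.subRight_apply]
  rw [← xbar_fin_sub p i k, mul_comm (xbar p ^ ((k : Fin p) : ℕ)), mul_assoc, mul_assoc,
    ← mul_pow, hx1, one_pow, mul_one]

lemma mul_invX_toPoly (p : ℕ) [NeZero p] (x c : Fin p → R9) :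
    toPoly p x * invX p (toPoly p c)
      = toPoly p (fun k => ∑ i, x i * c (i - k)) := by
  rw [toPoly, toPoly, map_sum]
  simp only [map_mul, invX_ofR, map_pow, invX_xbar]
  rw [Finset.sum_mul_sum]
  rw [toPoly]
  have hterm : ∀ k : Fin p, ofR p (∑ i, x i * c (i - k)) * xbar p ^ (k : ℕ)
      = ∑ i, ofR p (x i) * ofR p (c (i - k)) * xbar p ^ (k : ℕ) := by
    intro k
    rw [map_sum, Finset.sum_mul]
    exact Finset.sum_congr rfl fun i _ => by rw [map_mul]
  conv_rhs => rw [Finset.sum_congr rfl fun k _ => hterm k, Finset.sum_comm]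
  refine Finset.sum_congr rfl fun i _ => ?_
  refine Fintype.sum_equiv (Equiv.subLeft i) _ _ fun j => ?_
  simp only [Equiv.subLeft_apply, sub_sub_cancel]
  rw [← xbar_fin_sub p i j]
  ring

lemma mem_dual_iff (p : ℕ) [NeZero p] (e : Rn p) (x : Fin p → R9) :
    x ∈ dualCode p (Ideal.span {e}) ↔ toPoly p x * invX p e = 0 := by
  constructor
  · intro hx
    obtain ⟨c₀, hc₀⟩ := toPoly_surjective p (NeZero.ne p) e
    rw [← hc₀, mul_invX_toPoly]
    have hz : ∀ k : Fin p, (∑ i, x i * c₀ (i - k)) = 0 := by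
      intro k
      refine hx (fun i => c₀ (i - k)) ?_
      rw [toPoly_shift, hc₀]
      exact Ideal.mul_mem_left _ _ (Ideal.subset_span rfl)
    rw [toPoly]
    simp [hz]
  · intro hz c hc
    obtain ⟨g, hgc⟩ := Ideal.mem_span_singleton'.mp hc
    have h0 : toPoly p x * invX p (toPoly p c) = 0 := by
      rw [← hgc, map_mul, mul_comm (invX p g), ← mul_assoc, hz, zero_mul]
    rw [mul_invX_toPoly] at h0
    have h6 := toPoly_eq_zero p (NeZero.ne p) h0
    have h1 := congrFun h6 0
    simpa using h1

lemma mul_eq_zero_iff_mem_span (p : ℕ) (f : Rn p) (hf : f * f = f) (g : Rn p) :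
    g * f = 0 ↔ g ∈ Ideal.span {1 - f} := by
  constructor
  · intro h
    rw [Ideal.mem_span_singleton']
    exact ⟨g, by rw [mul_sub, mul_one, h, sub_zero]⟩
  · intro h
    obtain ⟨w, hw⟩ := Ideal.mem_span_singleton'.mp h
    rw [← hw, mul_assoc, sub_mul, one_mul, hf, sub_self, mul_zero]

lemma dual_span_eq (p : ℕ) [NeZero p] (e : Rn p) (he : e * e = e) :
    dualCode p (Ideal.span {e}) = {x | toPoly p x ∈ Ideal.span {1 - invX p e}} := by
  ext x
  rw [Set.mem_setOf_eq, mem_dual_iff]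
  exact mul_eq_zero_iff_mem_span p (invX p e) (by rw [← map_mul, he]) _

-- ===== Section 4: monomials indexed by ZMod p =====

def mz (p : ℕ) [NeZero p] (a : ZMod p) : Rn p := xbar p ^ a.val

lemma mz_zero (p : ℕ) [NeZero p] : mz p 0 = 1 := by
  rw [mz, ZMod.val_zero, pow_zero]

lemma mz_add (p : ℕ) [NeZero p] (a b : ZMod p) : mz p (a + b) = mz p a * mz p b := by
  rw [mz, mz, mz, ZMod.val_add, ← xbar_pow_mod, pow_add]

lemma mod_aux (p v : ℕ) (hp : p ≠ 0) (hv : v ≤ p) : ((p - 1) * v) % p = (p - v) % p := by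
  have h1 : (p - 1) * v + v = p * v := by
    have hp1 : p - 1 + 1 = p := Nat.sub_add_cancel (Nat.one_le_iff_ne_zero.mpr hp)
    calc (p - 1) * v + v = (p - 1 + 1) * v := by ring
    _ = p * v := by rw [hp1]
  have h2 : (p - v) + v = p := Nat.sub_add_cancel hv
  have h4 : ((p - 1) * v + v) ≡ ((p - v) + v) [MOD p] := by
    unfold Nat.ModEq
    rw [h1, h2, Nat.mul_mod_right, Nat.mod_self]
  exact h4.add_right_cancel' _

lemma invX_mz (p : ℕ) [NeZero p] (a : ZMod p) : invX p (mz p a) = mz p (-a) := by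
  rw [mz, map_pow, invX_xbar, ← pow_mul, xbar_pow_mod]
  have hval : ((p - 1) * a.val) % p = (-a).val := by
    have hneg : (-a) = ((p - a.val : ℕ) : ZMod p) := by
      push_cast [Nat.cast_sub (le_of_lt (ZMod.val_lt a))]
      rw [ZMod.natCast_self, ZMod.natCast_val, ZMod.cast_id]
      ring
    rw [hneg, ZMod.val_natCast]
    exact mod_aux p a.val (NeZero.ne p) (le_of_lt (ZMod.val_lt a))
  rw [hval, mz]

section CharSums

variable (p : ℕ) [Fact p.Prime]

/-- full sum of monomials -/
def SS : Rn p := ∑ a : ZMod p, mz p a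

/-- `h = Q + N` -/
def Sh : Rn p := ∑ a : ZMod p, if a ≠ 0 then mz p a else 0

/-- `e = Q - N`, the Gauss-sum-like element -/
def Se : Rn p := ∑ a : ZMod p, ((quadraticChar (ZMod p) a : ℤ) : Rn p) * mz p a

lemma SS_eq : SS p = 1 + Sh p := by
  rw [SS, Sh]
  have h1 : ∀ a : ZMod p, mz p a
      = (if a = 0 then mz p a else 0) + (if a ≠ 0 then mz p a else 0) := by
    intro a; by_cases h : a = 0 <;> simp [h]
  rw [Finset.sum_congr rfl fun a _ => h1 a, Finset.sum_add_distrib]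
  congr 1
  rw [Finset.sum_ite_eq' Finset.univ (0 : ZMod p) (mz p)]
  simp [mz_zero]

lemma SS_mul_mz (b : ZMod p) : SS p * mz p b = SS p := by
  rw [SS, Finset.sum_mul]
  refine Fintype.sum_equiv (Equiv.addRight b) _ _ fun a => ?_
  rw [← mz_add]
  rfl

lemma SS_mul_SS : SS p * SS p = (p : Rn p) * SS p := by
  nth_rewrite 2 [SS]
  rw [Finset.mul_sum]
  rw [Finset.sum_congr rfl fun b _ => SS_mul_mz p b]
  rw [Finset.sum_const, Finset.card_univ, ZMod.card, nsmul_eq_mul]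

lemma Se_mul_SS (hp2 : p ≠ 2) : Se p * SS p = 0 := by
  have hchar2 : ringChar (ZMod p) ≠ 2 := by rw [ZMod.ringChar_zmod_n]; exact hp2
  rw [Se, Finset.sum_mul]
  have h1 : ∀ a : ZMod p, ((quadraticChar (ZMod p) a : ℤ) : Rn p) * mz p a * SS p
      = ((quadraticChar (ZMod p) a : ℤ) : Rn p) * SS p := by
    intro a
    rw [mul_assoc, mul_comm (mz p a), SS_mul_mz]
  rw [Finset.sum_congr rfl fun a _ => h1 a, ← Finset.sum_mul]
  have h2 : ∑ a : ZMod p, ((quadraticChar (ZMod p) a : ℤ) : Rn p) = 0 := by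
    have h3 : ((∑ a : ZMod p, (quadraticChar (ZMod p) a : ℤ) : ℤ) : Rn p) = 0 := by
      have h4 : ∑ a : ZMod p, (quadraticChar (ZMod p) a : ℤ)
          = ((∑ a : ZMod p, quadraticChar (ZMod p) a : ℤ)) := by
        push_cast
        rfl
      rw [h4]
      rw [quadraticChar_sum_zero hchar2]
      exact Int.cast_zero
    rw [← h3]
    push_cast
    rfl
  rw [h2, zero_mul]

end CharSums

section Jacobi

variable (p : ℕ) [Fact p.Prime]

lemma Jc (hp2 : p ≠ 2) (c : ZMod p) (hc : c ≠ 0) :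
    ∑ a : ZMod p, quadraticChar (ZMod p) a * quadraticChar (ZMod p) (c - a)
      = - quadraticChar (ZMod p) (-1) := by
  have hchar2 : ringChar (ZMod p) ≠ 2 := by rw [ZMod.ringChar_zmod_n]; exact hp2
  have hinv : (quadraticChar (ZMod p))⁻¹ = quadraticChar (ZMod p) :=
    (quadraticChar_isQuadratic (ZMod p)).inv
  have hjac := jacobiSum_nontrivial_inv (quadraticChar_ne_one hchar2)
  rw [hinv] at hjac
  have key : ∑ a : ZMod p, quadraticChar (ZMod p) a * quadraticChar (ZMod p) (c - a)
      = quadraticChar (ZMod p) c ^ 2 *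
        ∑ t : ZMod p, quadraticChar (ZMod p) t * quadraticChar (ZMod p) (1 - t) := by
    rw [Finset.mul_sum]
    refine Fintype.sum_equiv (Equiv.mulLeft₀ c hc).symm _ _ fun a => ?_
    show quadraticChar (ZMod p) a * quadraticChar (ZMod p) (c - a)
      = quadraticChar (ZMod p) c ^ 2 *
        (quadraticChar (ZMod p) (c⁻¹ * a) * quadraticChar (ZMod p) (1 - c⁻¹ * a))
    rw [← map_pow, ← map_mul, ← map_mul, ← map_mul]
    congr 1
    field_simp
  rw [key, quadraticChar_sq_one hc, one_mul]
  exact hjac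

lemma J0 (hp2 : p ≠ 2) (hps : ¬ IsSquare (-1 : ZMod p)) :
    ∑ a : ZMod p, quadraticChar (ZMod p) a * quadraticChar (ZMod p) (0 - a)
      = - ((p : ℤ) - 1) := by
  have hχ1 : quadraticChar (ZMod p) (-1) = -1 :=
    quadraticChar_neg_one_iff_not_isSquare.mpr hps
  have h1 : ∀ a : ZMod p, quadraticChar (ZMod p) a * quadraticChar (ZMod p) (0 - a)
      = - (1 - (if a = 0 then (1:ℤ) else 0)) := by
    intro a
    have h2 : (0 : ZMod p) - a = (-1) * a := by ring
    rw [h2, map_mul, hχ1]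
    by_cases h : a = 0
    · simp [h]
    · have hsq := quadraticChar_sq_one (F := ZMod p) h
      rw [if_neg h]
      linear_combination -hsq
  rw [Finset.sum_congr rfl fun a _ => h1 a]
  rw [Finset.sum_neg_distrib]
  rw [Finset.sum_sub_distrib, Finset.sum_const, Finset.card_univ, ZMod.card]
  rw [Finset.sum_ite_eq' Finset.univ (0 : ZMod p) (fun _ => (1:ℤ))]
  simp

end Jacobi

section MoreSums

variable (p : ℕ) [Fact p.Prime]

lemma Se_mul_Se (hp2 : p ≠ 2) (hps : ¬ IsSquare (-1 : ZMod p)) :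
    Se p * Se p = (1 - (p : Rn p)) + Sh p := by
  have key : Se p * Se p
      = ∑ c : ZMod p, ((∑ a : ZMod p, quadraticChar (ZMod p) a
          * quadraticChar (ZMod p) (c - a) : ℤ) : Rn p) * mz p c := by
    rw [Se, Finset.sum_mul_sum]
    have hrhs : ∀ c : ZMod p, ((∑ a : ZMod p, quadraticChar (ZMod p) a
          * quadraticChar (ZMod p) (c - a) : ℤ) : Rn p) * mz p c
        = ∑ a : ZMod p, ((quadraticChar (ZMod p) a
            * quadraticChar (ZMod p) (c - a) : ℤ) : Rn p) * mz p c := by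
      intro c
      rw [Int.cast_sum, Finset.sum_mul]
    rw [Finset.sum_congr rfl fun c _ => hrhs c]
    conv_rhs => rw [Finset.sum_comm]
    refine Finset.sum_congr rfl fun a _ => ?_
    refine Fintype.sum_equiv (Equiv.addLeft a) _ _ fun b => ?_
    show ((quadraticChar (ZMod p) a : ℤ) : Rn p) * mz p a
        * (((quadraticChar (ZMod p) b : ℤ) : Rn p) * mz p b)
      = ((quadraticChar (ZMod p) a * quadraticChar (ZMod p) (a + b - a) : ℤ) : Rn p)
          * mz p (a + b)
    rw [add_sub_cancel_left, mz_add]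
    push_cast
    ring
  rw [key]
  have hv : ∀ c : ZMod p, ((∑ a : ZMod p, quadraticChar (ZMod p) a
        * quadraticChar (ZMod p) (c - a) : ℤ) : Rn p) * mz p c
      = (if c ≠ 0 then mz p c else 0) + (if c = 0 then (1 - (p : Rn p)) else 0) := by
    intro c
    by_cases hc : c = 0
    · subst hc
      rw [J0 p hp2 hps]
      simp only [ne_eq, not_true_eq_false, if_false, if_pos rfl, mz_zero, mul_one]
      push_cast
      ring
    · rw [Jc p hp2 c hc]
      have hχ1 : quadraticChar (ZMod p) (-1) = -1 :=
        quadraticChar_neg_one_iff_not_isSquare.mpr hps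
      rw [hχ1]
      simp [hc]
  rw [Finset.sum_congr rfl fun c _ => hv c, Finset.sum_add_distrib]
  rw [Finset.sum_ite_eq' Finset.univ (0 : ZMod p) (fun _ => (1 - (p : Rn p)))]
  rw [← Sh]
  simp [add_comm]

lemma two_Q : 2 * Qpoly p = Sh p + Se p := by
  rw [Qpoly, Sh, Se, ← Finset.sum_add_distrib, Finset.mul_sum]
  refine Finset.sum_congr rfl fun i _ => ?_
  by_cases hi : i = 0
  · simp [hi, quadraticChar_zero]
  · by_cases hs : IsSquare i
    · have hχ : quadraticChar (ZMod p) i = 1 := (quadraticChar_one_iff_isSquare hi).mpr hs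
      rw [hχ]
      simp only [hi, hs, ne_eq, not_false_eq_true, and_self, if_true, if_pos]
      show 2 * mz p i = mz p i + ((1:ℤ) : Rn p) * mz p i
      push_cast
      ring
    · have hχ : quadraticChar (ZMod p) i = -1 := quadraticChar_neg_one_iff_not_isSquare.mpr hs
      rw [hχ]
      simp only [hi, hs, and_false, if_false, ne_eq, not_false_eq_true, if_pos]
      show (2:Rn p) * 0 = mz p i + ((-1:ℤ) : Rn p) * mz p i
      push_cast
      ring

lemma two_N : 2 * Npoly p = Sh p - Se p := by
  rw [Npoly, Sh, Se, ← Finset.sum_sub_distrib, Finset.mul_sum]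
  refine Finset.sum_congr rfl fun i _ => ?_
  by_cases hi : i = 0
  · simp [hi, quadraticChar_zero]
  · by_cases hs : IsSquare i
    · have hχ : quadraticChar (ZMod p) i = 1 := (quadraticChar_one_iff_isSquare hi).mpr hs
      rw [hχ]
      simp only [hi, hs, not_true_eq_false, and_false, if_false, ne_eq, not_false_eq_true, if_pos]
      show (2:Rn p) * 0 = mz p i - ((1:ℤ) : Rn p) * mz p i
      push_cast
      ring
    · have hχ : quadraticChar (ZMod p) i = -1 := quadraticChar_neg_one_iff_not_isSquare.mpr hs
      rw [hχ]
      simp only [hi, hs, ne_eq, not_false_eq_true, and_self, if_true, if_pos]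
      show 2 * mz p i = mz p i - ((-1:ℤ) : Rn p) * mz p i
      push_cast
      ring

lemma sq_neg_iff (hps : ¬ IsSquare (-1 : ZMod p)) (i : ZMod p) (hi : i ≠ 0) :
    IsSquare (-i) ↔ ¬ IsSquare i := by
  have hχ1 : quadraticChar (ZMod p) (-1) = -1 :=
    quadraticChar_neg_one_iff_not_isSquare.mpr hps
  have hni : (-i) ≠ 0 := neg_ne_zero.mpr hi
  rw [← quadraticChar_one_iff_isSquare hni, ← quadraticChar_neg_one_iff_not_isSquare]
  have h2 : (-i) = (-1) * i := by ring
  rw [h2, map_mul, hχ1]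
  constructor <;> intro h <;> linarith

lemma invX_Q (hps : ¬ IsSquare (-1 : ZMod p)) : invX p (Qpoly p) = Npoly p := by
  rw [Qpoly, map_sum]
  have h1 : ∀ i : ZMod p, invX p (xbar p ^ (i : ZMod p).val) = mz p (-i) := fun i => invX_mz p i
  rw [Finset.sum_congr rfl fun i _ => by rw [apply_ite (invX p), h1 i, map_zero]]
  rw [Npoly]
  refine Fintype.sum_equiv (Equiv.neg (ZMod p)) _ _ fun i => ?_
  show (if i ≠ 0 ∧ IsSquare i then mz p (-i) else 0)
    = (if -i ≠ 0 ∧ ¬ IsSquare (-i) then xbar p ^ (-i : ZMod p).val else 0)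
  by_cases hi : i = 0
  · simp [hi]
  · have hcond : (i ≠ 0 ∧ IsSquare i) ↔ (-i ≠ 0 ∧ ¬ IsSquare (-i)) := by
      rw [sq_neg_iff p hps i hi]
      simp [hi, neg_ne_zero]
    rw [if_congr hcond rfl rfl]
    rfl

lemma invX_N (hps : ¬ IsSquare (-1 : ZMod p)) : invX p (Npoly p) = Qpoly p := by
  rw [Npoly, map_sum]
  have h1 : ∀ i : ZMod p, invX p (xbar p ^ (i : ZMod p).val) = mz p (-i) := fun i => invX_mz p i
  rw [Finset.sum_congr rfl fun i _ => by rw [apply_ite (invX p), h1 i, map_zero]]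
  rw [Qpoly]
  refine Fintype.sum_equiv (Equiv.neg (ZMod p)) _ _ fun i => ?_
  show (if i ≠ 0 ∧ ¬ IsSquare i then mz p (-i) else 0)
    = (if -i ≠ 0 ∧ IsSquare (-i) then xbar p ^ (-i : ZMod p).val else 0)
  by_cases hi : i = 0
  · simp [hi]
  · have hcond : (i ≠ 0 ∧ ¬ IsSquare i) ↔ (-i ≠ 0 ∧ IsSquare (-i)) := by
      rw [sq_neg_iff p hps i hi]
      simp [hi, neg_ne_zero]
    rw [if_congr hcond rfl rfl]
    rfl

end MoreSums

lemma split_mul (n : ℕ) (u A B C D : Rn n) (hu : u * u = u) :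
    (u * A + (1 - u) * B) * (u * C + (1 - u) * D) = u * (A * C) + (1 - u) * (B * D) := by
  linear_combination (A * C + B * D - A * D - B * C) * hu

lemma assemble (p : ℕ) [Fact p.Prime] [NeZero p]
    (hE1idem : E1gen p * E1gen p = E1gen p)
    (hE2idem : E2gen p * E2gen p = E2gen p)
    (hDE1 : D1gen p * E1gen p = E1gen p)
    (hDE2 : D2gen p * E2gen p = E2gen p)
    (hinv1 : 1 - invX p (E1gen p) = D1gen p)
    (hinv2 : 1 - invX p (E2gen p) = D2gen p) :
    (∀ x : Fin p → R9, toPoly p x ∈ Ideal.span {E1gen p} →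
        x ∈ dualCode p (Ideal.span {E1gen p})) ∧
    (∀ x : Fin p → R9, toPoly p x ∈ Ideal.span {E2gen p} →
        x ∈ dualCode p (Ideal.span {E2gen p})) ∧
    dualCode p (Ideal.span {E1gen p}) = {x | toPoly p x ∈ Ideal.span {D1gen p}} ∧
    dualCode p (Ideal.span {E2gen p}) = {x | toPoly p x ∈ Ideal.span {D2gen p}} := by
  have hdual1 : dualCode p (Ideal.span {E1gen p}) = {x | toPoly p x ∈ Ideal.span {D1gen p}} := by
    rw [dual_span_eq p (E1gen p) hE1idem, hinv1]
  have hdual2 : dualCode p (Ideal.span {E2gen p}) = {x | toPoly p x ∈ Ideal.span {D2gen p}} := by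
    rw [dual_span_eq p (E2gen p) hE2idem, hinv2]
  refine ⟨?_, ?_, hdual1, hdual2⟩
  · intro x hx
    rw [hdual1]
    show toPoly p x ∈ Ideal.span {D1gen p}
    obtain ⟨g, hg⟩ := Ideal.mem_span_singleton'.mp hx
    refine Ideal.mem_span_singleton'.mpr ⟨g * E1gen p, ?_⟩
    calc g * E1gen p * D1gen p = g * (D1gen p * E1gen p) := by ring
    _ = g * E1gen p := by rw [hDE1]
    _ = toPoly p x := hg
  · intro x hx
    rw [hdual2]
    show toPoly p x ∈ Ideal.span {D2gen p}
    obtain ⟨g, hg⟩ := Ideal.mem_span_singleton'.mp hx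
    refine Ideal.mem_span_singleton'.mpr ⟨g * E2gen p, ?_⟩
    calc g * E2gen p * D2gen p = g * (D2gen p * E2gen p) := by ring
    _ = g * E2gen p := by rw [hDE2]
    _ = toPoly p x := hg

theorem stmt18 (p : ℕ) [Fact p.Prime] (hp12 : p % 12 = 11) :
    (∀ x : Fin p → R9, toPoly p x ∈ Ideal.span {E1gen p} →
        x ∈ dualCode p (Ideal.span {E1gen p})) ∧
    (∀ x : Fin p → R9, toPoly p x ∈ Ideal.span {E2gen p} →
        x ∈ dualCode p (Ideal.span {E2gen p})) ∧
    dualCode p (Ideal.span {E1gen p}) = {x | toPoly p x ∈ Ideal.span {D1gen p}} ∧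
    dualCode p (Ideal.span {E2gen p}) = {x | toPoly p x ∈ Ideal.span {D2gen p}} := by
  haveI : NeZero p := ⟨by omega⟩
  have hp2 : p ≠ 2 := by omega
  have hps : ¬ IsSquare (-1 : ZMod p) := by
    rw [FiniteField.isSquare_neg_one_iff, ZMod.card]
    omega
  have h9 := nine_eq_zero p
  have hu : uP p * uP p = uP p := by rw [uP, ← map_mul, uu_mul_uu]
  have hinvu : invX p (uP p) = uP p := by rw [uP]; exact invX_ofR p uu
  have hS := SS_eq p
  have hSSm := SS_mul_SS p
  have hSem := Se_mul_SS p hp2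
  have hee := Se_mul_Se p hp2 hps
  have hQ5 : Qpoly p = 5 * Sh p + 5 * Se p := by linear_combination 5 * two_Q p - Qpoly p * h9
  have hN5 : Npoly p = 5 * Sh p - 5 * Se p := by linear_combination 5 * two_N p - Npoly p * h9
  have hB1 : Sh p * Sh p = ((p : Rn p) - 1) + ((p : Rn p) - 2) * Sh p := by
    linear_combination ((p : Rn p) - SS p - 1 - Sh p) * hS + hSSm
  have hhe : Sh p * Se p = - Se p := by linear_combination hSem - Se p * hS
  have htri : (p+1)/12 % 3 = 0 ∨ (p+1)/12 % 3 = 1 ∨ (p+1)/12 % 3 = 2 := by omega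
  rcases htri with ht | ht | ht
  · -- case r % 3 = 0
    have hq36 : p + 1 = 36 * (((p+1)/12)/3) := by omega
    have hcastN := congrArg (fun n : ℕ => (n : Rn p)) hq36
    push_cast at hcastN
    have hpc : (p : Rn p) = 8 := by linear_combination hcastN + (4 * ((((p+1)/12)/3 : ℕ) : Rn p) - 1) * h9
    have hh2 : Sh p * Sh p = 7 + 6 * Sh p := by linear_combination hB1 + (1 + Sh p) * hpc
    have he2 : Se p * Se p = (-7) + Sh p := by linear_combination hee - hpc
    have q1 : (1 + Npoly p) * (1 + Npoly p) = (1 + Npoly p) := by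
      linear_combination (1 + (-5) * Se p + (5) * Sh p + Npoly p) * hN5 + (25) * hh2 + (-50) * hhe + (25) * he2 + ((5) * Se p + (20) * Sh p) * h9
    have q2 : (1 + Qpoly p) * (1 + Qpoly p) = (1 + Qpoly p) := by
      linear_combination (1 + (5) * Se p + (5) * Sh p + Qpoly p) * hQ5 + (25) * hh2 + (50) * hhe + (25) * he2 + ((-5) * Se p + (20) * Sh p) * h9
    have q3 : (8 * Qpoly p) * (1 + Npoly p) = (1 + Npoly p) := by
      linear_combination (8 + (8) * Npoly p) * hQ5 + (-1 + (40) * Se p + (40) * Sh p) * hN5 + (200) * hh2 + (-200) * he2 + (311 + (5) * Se p + (115) * Sh p) * h9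
    have q4 : (8 * Npoly p) * (1 + Qpoly p) = (1 + Qpoly p) := by
      linear_combination (-1 + (8) * Npoly p) * hQ5 + (8 + (40) * Se p + (40) * Sh p) * hN5 + (200) * hh2 + (-200) * he2 + (311 + (-5) * Se p + (115) * Sh p) * h9
    have lin1 : (1 : Rn p) - (1 + Qpoly p) = (8 * Qpoly p) := by
      linear_combination (-9) * hQ5 + ((-5) * Se p + (-5) * Sh p) * h9
    have lin2 : (1 : Rn p) - (1 + Npoly p) = (8 * Npoly p) := by
      linear_combination (-9) * hN5 + ((5) * Se p + (-5) * Sh p) * h9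
    have hE1 : E1gen p = uP p * (1 + Npoly p) + (1 - uP p) * (1 + Qpoly p) := by
      simp only [E1gen, ht]
      norm_num
    have hE2 : E2gen p = uP p * (1 + Qpoly p) + (1 - uP p) * (1 + Npoly p) := by
      simp only [E2gen, ht]
      norm_num
    have hD1 : D1gen p = uP p * (8 * Qpoly p) + (1 - uP p) * (8 * Npoly p) := by
      simp only [D1gen, ht]
      norm_num
    have hD2 : D2gen p = uP p * (8 * Npoly p) + (1 - uP p) * (8 * Qpoly p) := by
      simp only [D2gen, ht]
      norm_num
    have hE1idem : E1gen p * E1gen p = E1gen p := by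
      rw [hE1, split_mul p (uP p) (1 + Npoly p) (1 + Qpoly p) (1 + Npoly p) (1 + Qpoly p) hu, q1, q2]
    have hE2idem : E2gen p * E2gen p = E2gen p := by
      rw [hE2, split_mul p (uP p) (1 + Qpoly p) (1 + Npoly p) (1 + Qpoly p) (1 + Npoly p) hu, q2, q1]
    have hDE1 : D1gen p * E1gen p = E1gen p := by
      rw [hD1, hE1, split_mul p (uP p) (8 * Qpoly p) (8 * Npoly p) (1 + Npoly p) (1 + Qpoly p) hu, q3, q4]
    have hDE2 : D2gen p * E2gen p = E2gen p := by
      rw [hD2, hE2, split_mul p (uP p) (8 * Npoly p) (8 * Qpoly p) (1 + Qpoly p) (1 + Npoly p) hu, q4, q3]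
    have hinv1 : 1 - invX p (E1gen p) = D1gen p := by
      rw [hE1, hD1]
      simp only [map_add, map_mul, map_sub, map_one, map_ofNat, hinvu, invX_Q p hps, invX_N p hps]
      linear_combination (uP p) * lin1 + (1 - uP p) * lin2
    have hinv2 : 1 - invX p (E2gen p) = D2gen p := by
      rw [hE2, hD2]
      simp only [map_add, map_mul, map_sub, map_one, map_ofNat, hinvu, invX_Q p hps, invX_N p hps]
      linear_combination (uP p) * lin2 + (1 - uP p) * lin1
    exact assemble p hE1idem hE2idem hDE1 hDE2 hinv1 hinv2
  · -- case r % 3 = 1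
    have hq36 : p + 1 = 36 * (((p+1)/12)/3) + 12 := by omega
    have hcastN := congrArg (fun n : ℕ => (n : Rn p)) hq36
    push_cast at hcastN
    have hpc : (p : Rn p) = 2 := by linear_combination hcastN + (4 * ((((p+1)/12)/3 : ℕ) : Rn p) + 1) * h9
    have hh2 : Sh p * Sh p = 1 + 0 * Sh p := by linear_combination hB1 + (1 + Sh p) * hpc
    have he2 : Se p * Se p = (-1) + Sh p := by linear_combination hee - hpc
    have q1 : (7 + Qpoly p + 3 * Npoly p) * (7 + Qpoly p + 3 * Npoly p) = (7 + Qpoly p + 3 * Npoly p) := by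
      linear_combination (13 + (5) * Se p + (5) * Sh p + (6) * Npoly p + Qpoly p) * hQ5 + (39 + (-15) * Se p + (75) * Sh p + (9) * Npoly p) * hN5 + (400) * hh2 + (-400) * hhe + (100) * he2 + (38 + (30) * Se p + (40) * Sh p) * h9
    have q2 : (7 + Npoly p + 3 * Qpoly p) * (7 + Npoly p + 3 * Qpoly p) = (7 + Npoly p + 3 * Qpoly p) := by
      linear_combination (39 + (45) * Se p + (45) * Sh p + (6) * Npoly p + (9) * Qpoly p) * hQ5 + (13 + (25) * Se p + (35) * Sh p + Npoly p) * hN5 + (400) * hh2 + (400) * hhe + (100) * he2 + (38 + (-30) * Se p + (40) * Sh p) * h9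
    have q3 : (3 + 6 * Qpoly p + 8 * Npoly p) * (7 + Qpoly p + 3 * Npoly p) = (7 + Qpoly p + 3 * Npoly p) := by
      linear_combination (44 + (30) * Se p + (30) * Sh p + (26) * Npoly p + (6) * Qpoly p) * hQ5 + (62 + (10) * Se p + (250) * Sh p + (24) * Npoly p) * hN5 + (1400) * hh2 + (-900) * hhe + (100) * he2 + (146 + (90) * Se p + (70) * Sh p) * h9
    have q4 : (3 + 6 * Npoly p + 8 * Qpoly p) * (7 + Npoly p + 3 * Qpoly p) = (7 + Npoly p + 3 * Qpoly p) := by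
      linear_combination (62 + (120) * Se p + (120) * Sh p + (26) * Npoly p + (24) * Qpoly p) * hQ5 + (44 + (100) * Se p + (160) * Sh p + (6) * Npoly p) * hN5 + (1400) * hh2 + (900) * hhe + (100) * he2 + (146 + (-90) * Se p + (70) * Sh p) * h9
    have lin1 : (1 : Rn p) - (7 + Npoly p + 3 * Qpoly p) = (3 + 6 * Qpoly p + 8 * Npoly p) := by
      linear_combination (-9) * hQ5 + (-9) * hN5 + (-1 + (-10) * Sh p) * h9
    have lin2 : (1 : Rn p) - (7 + Qpoly p + 3 * Npoly p) = (3 + 6 * Npoly p + 8 * Qpoly p) := by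
      linear_combination (-9) * hQ5 + (-9) * hN5 + (-1 + (-10) * Sh p) * h9
    have hE1 : E1gen p = uP p * (7 + Qpoly p + 3 * Npoly p) + (1 - uP p) * (7 + Npoly p + 3 * Qpoly p) := by
      simp only [E1gen, ht]
      norm_num
    have hE2 : E2gen p = uP p * (7 + Npoly p + 3 * Qpoly p) + (1 - uP p) * (7 + Qpoly p + 3 * Npoly p) := by
      simp only [E2gen, ht]
      norm_num
    have hD1 : D1gen p = uP p * (3 + 6 * Qpoly p + 8 * Npoly p) + (1 - uP p) * (3 + 6 * Npoly p + 8 * Qpoly p) := by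
      simp only [D1gen, ht]
      norm_num
    have hD2 : D2gen p = uP p * (3 + 6 * Npoly p + 8 * Qpoly p) + (1 - uP p) * (3 + 6 * Qpoly p + 8 * Npoly p) := by
      simp only [D2gen, ht]
      norm_num
    have hE1idem : E1gen p * E1gen p = E1gen p := by
      rw [hE1, split_mul p (uP p) (7 + Qpoly p + 3 * Npoly p) (7 + Npoly p + 3 * Qpoly p) (7 + Qpoly p + 3 * Npoly p) (7 + Npoly p + 3 * Qpoly p) hu, q1, q2]
    have hE2idem : E2gen p * E2gen p = E2gen p := by
      rw [hE2, split_mul p (uP p) (7 + Npoly p + 3 * Qpoly p) (7 + Qpoly p + 3 * Npoly p) (7 + Npoly p + 3 * Qpoly p) (7 + Qpoly p + 3 * Npoly p) hu, q2, q1]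
    have hDE1 : D1gen p * E1gen p = E1gen p := by
      rw [hD1, hE1, split_mul p (uP p) (3 + 6 * Qpoly p + 8 * Npoly p) (3 + 6 * Npoly p + 8 * Qpoly p) (7 + Qpoly p + 3 * Npoly p) (7 + Npoly p + 3 * Qpoly p) hu, q3, q4]
    have hDE2 : D2gen p * E2gen p = E2gen p := by
      rw [hD2, hE2, split_mul p (uP p) (3 + 6 * Npoly p + 8 * Qpoly p) (3 + 6 * Qpoly p + 8 * Npoly p) (7 + Npoly p + 3 * Qpoly p) (7 + Qpoly p + 3 * Npoly p) hu, q4, q3]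
    have hinv1 : 1 - invX p (E1gen p) = D1gen p := by
      rw [hE1, hD1]
      simp only [map_add, map_mul, map_sub, map_one, map_ofNat, hinvu, invX_Q p hps, invX_N p hps]
      linear_combination (uP p) * lin1 + (1 - uP p) * lin2
    have hinv2 : 1 - invX p (E2gen p) = D2gen p := by
      rw [hE2, hD2]
      simp only [map_add, map_mul, map_sub, map_one, map_ofNat, hinvu, invX_Q p hps, invX_N p hps]
      linear_combination (uP p) * lin2 + (1 - uP p) * lin1
    exact assemble p hE1idem hE2idem hDE1 hDE2 hinv1 hinv2
  · -- case r % 3 = 2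
    have hq36 : p + 1 = 36 * (((p+1)/12)/3) + 24 := by omega
    have hcastN := congrArg (fun n : ℕ => (n : Rn p)) hq36
    push_cast at hcastN
    have hpc : (p : Rn p) = 5 := by linear_combination hcastN + (4 * ((((p+1)/12)/3 : ℕ) : Rn p) + 2) * h9
    have hh2 : Sh p * Sh p = 4 + 3 * Sh p := by linear_combination hB1 + (1 + Sh p) * hpc
    have he2 : Se p * Se p = (-4) + Sh p := by linear_combination hee - hpc
    have q1 : (4 + Qpoly p + 6 * Npoly p) * (4 + Qpoly p + 6 * Npoly p) = (4 + Qpoly p + 6 * Npoly p) := by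
      linear_combination (7 + (5) * Se p + (5) * Sh p + (12) * Npoly p + Qpoly p) * hQ5 + (42 + (-120) * Se p + (240) * Sh p + (36) * Npoly p) * hN5 + (1225) * hh2 + (-1750) * hhe + (625) * he2 + (268 + (175) * Se p + (505) * Sh p) * h9
    have q2 : (4 + Npoly p + 6 * Qpoly p) * (4 + Npoly p + 6 * Qpoly p) = (4 + Npoly p + 6 * Qpoly p) := by
      linear_combination (42 + (180) * Se p + (180) * Sh p + (12) * Npoly p + (36) * Qpoly p) * hQ5 + (7 + (55) * Se p + (65) * Sh p + Npoly p) * hN5 + (1225) * hh2 + (1750) * hhe + (625) * he2 + (268 + (-175) * Se p + (505) * Sh p) * h9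
    have q3 : (6 + 3 * Qpoly p + 8 * Npoly p) * (4 + Qpoly p + 6 * Npoly p) = (4 + Qpoly p + 6 * Npoly p) := by
      linear_combination (17 + (15) * Se p + (15) * Sh p + (26) * Npoly p + (3) * Qpoly p) * hQ5 + (62 + (-110) * Se p + (370) * Sh p + (48) * Npoly p) * hN5 + (1925) * hh2 + (-2250) * hhe + (625) * he2 + (580 + (225) * Se p + (755) * Sh p) * h9
    have q4 : (6 + 3 * Npoly p + 8 * Qpoly p) * (4 + Npoly p + 6 * Qpoly p) = (4 + Npoly p + 6 * Qpoly p) := by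
      linear_combination (62 + (240) * Se p + (240) * Sh p + (26) * Npoly p + (48) * Qpoly p) * hQ5 + (17 + (115) * Se p + (145) * Sh p + (3) * Npoly p) * hN5 + (1925) * hh2 + (2250) * hhe + (625) * he2 + (580 + (-225) * Se p + (755) * Sh p) * h9
    have lin1 : (1 : Rn p) - (4 + Npoly p + 6 * Qpoly p) = (6 + 3 * Qpoly p + 8 * Npoly p) := by
      linear_combination (-9) * hQ5 + (-9) * hN5 + (-1 + (-10) * Sh p) * h9
    have lin2 : (1 : Rn p) - (4 + Qpoly p + 6 * Npoly p) = (6 + 3 * Npoly p + 8 * Qpoly p) := by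
      linear_combination (-9) * hQ5 + (-9) * hN5 + (-1 + (-10) * Sh p) * h9
    have hE1 : E1gen p = uP p * (4 + Qpoly p + 6 * Npoly p) + (1 - uP p) * (4 + Npoly p + 6 * Qpoly p) := by
      simp only [E1gen, ht]
      norm_num
    have hE2 : E2gen p = uP p * (4 + Npoly p + 6 * Qpoly p) + (1 - uP p) * (4 + Qpoly p + 6 * Npoly p) := by
      simp only [E2gen, ht]
      norm_num
    have hD1 : D1gen p = uP p * (6 + 3 * Qpoly p + 8 * Npoly p) + (1 - uP p) * (6 + 3 * Npoly p + 8 * Qpoly p) := by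
      simp only [D1gen, ht]
      norm_num
    have hD2 : D2gen p = uP p * (6 + 3 * Npoly p + 8 * Qpoly p) + (1 - uP p) * (6 + 3 * Qpoly p + 8 * Npoly p) := by
      simp only [D2gen, ht]
      norm_num
    have hE1idem : E1gen p * E1gen p = E1gen p := by
      rw [hE1, split_mul p (uP p) (4 + Qpoly p + 6 * Npoly p) (4 + Npoly p + 6 * Qpoly p) (4 + Qpoly p + 6 * Npoly p) (4 + Npoly p + 6 * Qpoly p) hu, q1, q2]
    have hE2idem : E2gen p * E2gen p = E2gen p := by
      rw [hE2, split_mul p (uP p) (4 + Npoly p + 6 * Qpoly p) (4 + Qpoly p + 6 * Npoly p) (4 + Npoly p + 6 * Qpoly p) (4 + Qpoly p + 6 * Npoly p) hu, q2, q1]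
    have hDE1 : D1gen p * E1gen p = E1gen p := by
      rw [hD1, hE1, split_mul p (uP p) (6 + 3 * Qpoly p + 8 * Npoly p) (6 + 3 * Npoly p + 8 * Qpoly p) (4 + Qpoly p + 6 * Npoly p) (4 + Npoly p + 6 * Qpoly p) hu, q3, q4]
    have hDE2 : D2gen p * E2gen p = E2gen p := by
      rw [hD2, hE2, split_mul p (uP p) (6 + 3 * Npoly p + 8 * Qpoly p) (6 + 3 * Qpoly p + 8 * Npoly p) (4 + Npoly p + 6 * Qpoly p) (4 + Qpoly p + 6 * Npoly p) hu, q4, q3]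
    have hinv1 : 1 - invX p (E1gen p) = D1gen p := by
      rw [hE1, hD1]
      simp only [map_add, map_mul, map_sub, map_one, map_ofNat, hinvu, invX_Q p hps, invX_N p hps]
      linear_combination (uP p) * lin1 + (1 - uP p) * lin2
    have hinv2 : 1 - invX p (E2gen p) = D2gen p := by
      rw [hE2, hD2]
      simp only [map_add, map_mul, map_sub, map_one, map_ofNat, hinvu, invX_Q p hps, invX_N p hps]
      linear_combination (uP p) * lin2 + (1 - uP p) * lin1
    exact assemble p hE1idem hE2idem hDE1 hDE2 hinv1 hinv2
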